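/- Let f : X → Y be a finite surjective morphism of topological spaces in the following sense: f is closed, surjective, with finite fibres, and dim f⁻¹(Z) ≤ dim Z for every closed Z ⊆ Y (where dim denotes Krull/topological dimension). Then for any subset A ⊆ Y, dim f⁻¹(A) ≤ dim A, and dim X = dim Y. -/

import Mathlib

open Set Order Topology TopologicalSpace

section AuxTop

variable {X Y : Type*} [TopologicalSpace X] [TopologicalSpace Y] {f : X → Y}

/-- A set squeezed between an irreducible set and its closure is irreducible. -/
lemma aux_irr_between {s t : Set Y} (hs : IsIrreducible s) (hst : s ⊆ t)
    (hts : t ⊆ closure s) : IsIrreducible t := by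
  refine ⟨hs.nonempty.mono hst, fun u v hu hv ⟨x, hxt, hxu⟩ ⟨y, hyt, hyv⟩ => ?_⟩
  have hxu' : (s ∩ u).Nonempty := (mem_closure_iff.mp (hts hxt) u hu hxu).imp fun z hz => ⟨hz.2, hz.1⟩
  have hyv' : (s ∩ v).Nonempty := (mem_closure_iff.mp (hts hyt) v hv hyv).imp fun z hz => ⟨hz.2, hz.1⟩
  obtain ⟨z, hzs, hzuv⟩ := hs.2 u v hu hv hxu' hyv'
  exact ⟨z, hst hzs, hzuv⟩

/-- The preimage in the subtype of an irreducible subset of `A` is irreducible. -/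
lemma aux_irr_preimage {A s : Set Y} (hsA : s ⊆ A) (hs : IsIrreducible s) :
    IsIrreducible ((Subtype.val : A → Y) ⁻¹' s) := by
  obtain ⟨x, hx⟩ := hs.nonempty
  refine ⟨⟨⟨x, hsA hx⟩, hx⟩, fun u v hu hv ⟨a, has, hau⟩ ⟨b, hbs, hbv⟩ => ?_⟩
  obtain ⟨U, hU, rfl⟩ := isOpen_induced_iff.mp hu
  obtain ⟨V, hV, rfl⟩ := isOpen_induced_iff.mp hv
  obtain ⟨z, hzs, hzU, hzV⟩ := hs.2 U V hU hV ⟨a, has, hau⟩ ⟨b, hbs, hbv⟩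
  exact ⟨⟨z, hsA hzs⟩, hzs, hzU, hzV⟩


/-- Minimal closed subset mapping onto an irreducible image is irreducible. -/
lemma aux_zorn (hclosed : ∀ C : Set X, IsClosed C → IsClosed (f '' C))
    (hfib : ∀ y : Y, (f ⁻¹' {y}).Finite)
    {B : Set X} (hB : IsClosed B) (hD : IsIrreducible (f '' B)) :
    ∃ C : Set X, C ⊆ B ∧ IsClosed C ∧ IsIrreducible C ∧ f '' C = f '' B := by
  set S : Set (Set X) := {C | C ⊆ B ∧ IsClosed C ∧ f '' C = f '' B} with hS
  have key : ∀ c ⊆ S, IsChain (· ⊆ ·) c → c.Nonempty → ∃ lb ∈ S, ∀ s ∈ c, lb ⊆ s := by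
    intro c hcS hchain hcne
    refine ⟨⋂₀ c, ⟨?_, ?_, ?_⟩, fun s hs => Set.sInter_subset_of_mem hs⟩
    · obtain ⟨s, hs⟩ := hcne
      exact (Set.sInter_subset_of_mem hs).trans (hcS hs).1
    · exact isClosed_sInter fun s hs => (hcS hs).2.1
    · refine le_antisymm ?_ ?_
      · obtain ⟨s, hs⟩ := hcne
        exact (Set.image_mono (Set.sInter_subset_of_mem hs)).trans (hcS hs).2.2.le
      · rintro y hy
        set F := f ⁻¹' {y} with hF
        set T : Set (Set X) := (fun C => C ∩ F) '' c with hT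
        have hTfin : T.Finite := Set.Finite.subset (hfib y).finite_subsets
          (by rintro t ⟨C, _, rfl⟩; exact Set.inter_subset_right)
        have hTne : T.Nonempty := hcne.image _
        obtain ⟨m, hmT, hminT⟩ : ∃ m ∈ T, ∀ t ∈ T, id t ≤ id m → id m = id t := by
          obtain ⟨m, hm1, hm2⟩ := Set.Finite.exists_minimalFor id T hTfin hTne
          exact ⟨m, hm1, fun t ht h => le_antisymm (hm2 ht h) h⟩
        have hmle : ∀ t ∈ T, m ⊆ t := by
          intro t htT
          obtain ⟨C, hC, rfl⟩ := htT
          obtain ⟨C', hC', rfl⟩ := hmT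
          rcases eq_or_ne C C' with rfl | hne
          · exact Subset.rfl
          · rcases hchain hC' hC hne.symm with h | h
            · exact Set.inter_subset_inter_left _ h
            · have heq := hminT _ ⟨C, hC, rfl⟩ (Set.inter_subset_inter_left (s := C) (t := C') F h)
              simp only [id_eq] at heq
              show C' ∩ F ⊆ C ∩ F
              exact heq.le
        have hmne : m.Nonempty := by
          obtain ⟨C, hC, rfl⟩ := hmT
          have : y ∈ f '' C := (hcS hC).2.2.symm ▸ hy
          obtain ⟨x, hxC, hxy⟩ := this
          exact ⟨x, hxC, hxy⟩
        obtain ⟨x, hxm⟩ := hmne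
        have hxF : x ∈ F := by
          obtain ⟨C, hC, rfl⟩ := hmT
          exact hxm.2
        refine ⟨x, ?_, hxF⟩
        intro C hC
        exact (hmle _ ⟨C, hC, rfl⟩ hxm).1
  obtain ⟨C, hCB, hmin⟩ := zorn_superset_nonempty S key B ⟨Subset.rfl, hB, rfl⟩
  obtain ⟨hCB', hCcl, hCim⟩ := hmin.prop
  refine ⟨C, hCB', hCcl, ⟨?_, ?_⟩, hCim⟩
  · -- nonempty
    rw [← Set.image_nonempty (f := f), hCim]
    exact hD.nonempty
  · -- preirreducible
    rw [isPreirreducible_iff_isClosed_union_isClosed]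
    intro z₁ z₂ hz₁ hz₂ hsub
    have hunion : f '' (C ∩ z₁) ∪ f '' (C ∩ z₂) = f '' B := by
      rw [← Set.image_union, ← Set.inter_union_distrib_left,
        Set.inter_eq_self_of_subset_left hsub, hCim]
    have := isPreirreducible_iff_isClosed_union_isClosed.mp hD.2 (f '' (C ∩ z₁)) (f '' (C ∩ z₂))
      (hclosed _ (hCcl.inter hz₁)) (hclosed _ (hCcl.inter hz₂)) (hunion ▸ Subset.rfl)
    rcases this with h | h
    · left
      have hmem : C ∩ z₁ ∈ S :=
        ⟨Set.inter_subset_left.trans hCB', hCcl.inter hz₁,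
          le_antisymm (Set.image_mono Set.inter_subset_left |>.trans hCim.le)
            (by rw [← hCim] at h ⊢; exact h)⟩
      have : C ⊆ C ∩ z₁ := hmin.2 hmem Set.inter_subset_left
      exact fun x hx => (this hx).2
    · right
      have hmem : C ∩ z₂ ∈ S :=
        ⟨Set.inter_subset_left.trans hCB', hCcl.inter hz₂,
          le_antisymm (Set.image_mono Set.inter_subset_left |>.trans hCim.le)
            (by rw [← hCim] at h ⊢; exact h)⟩
      have : C ⊆ C ∩ z₂ := hmin.2 hmem Set.inter_subset_left
      exact fun x hx => (this hx).2

/-- One step: produce an irreducible closed subset of `B` mapping exactly onto `D₀`. -/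
lemma aux_step (hcont : Continuous f)
    (hclosed : ∀ C : Set X, IsClosed C → IsClosed (f '' C))
    (hfib : ∀ y : Y, (f ⁻¹' {y}).Finite)
    {B : Set X} (hB : IsClosed B) {D₀ : Set Y} (hD₀cl : IsClosed D₀)
    (hD₀irr : IsIrreducible D₀) (hsub : D₀ ⊆ f '' B) :
    ∃ C : Set X, C ⊆ B ∧ IsClosed C ∧ IsIrreducible C ∧ f '' C = D₀ := by
  have hB' : IsClosed (B ∩ f ⁻¹' D₀) := hB.inter (hD₀cl.preimage hcont)
  have him : f '' (B ∩ f ⁻¹' D₀) = D₀ := by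
    refine le_antisymm ?_ ?_
    · rintro y ⟨x, ⟨-, hx₂⟩, rfl⟩
      exact hx₂
    · rintro y hy
      obtain ⟨x, hxB, rfl⟩ := hsub hy
      exact ⟨x, ⟨hxB, hy⟩, rfl⟩
  obtain ⟨C, hCB, hCcl, hCirr, hCim⟩ := aux_zorn hclosed hfib hB' (by rw [him]; exact hD₀irr)
  exact ⟨C, hCB.trans Set.inter_subset_left, hCcl, hCirr, hCim.trans him⟩

/-- Lifting a chain of irreducible closed sets along `f` below a closed set `B`. -/
lemma aux_lift (hcont : Continuous f)
    (hclosed : ∀ C : Set X, IsClosed C → IsClosed (f '' C))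
    (hfib : ∀ y : Y, (f ⁻¹' {y}).Finite) :
    ∀ (n : ℕ) (Dc : Fin (n+1) → Set Y), (∀ i, IsClosed (Dc i)) →
    (∀ i, IsIrreducible (Dc i)) → (∀ i j, i < j → Dc i ⊂ Dc j) →
    ∀ B : Set X, IsClosed B → Dc (Fin.last n) ⊆ f '' B →
    ∃ E : Fin (n+1) → Set X, (∀ i, IsClosed (E i)) ∧ (∀ i, IsIrreducible (E i)) ∧
      (∀ i, f '' E i = Dc i) ∧ (∀ i j, i < j → E i ⊂ E j) ∧ (∀ i, E i ⊆ B) := by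
  intro n
  induction n with
  | zero =>
    intro Dc hcl hirr _ B hB hsub
    obtain ⟨C, hCB, hCcl, hCirr, hCim⟩ :=
      aux_step hcont hclosed hfib hB (hcl 0) (hirr 0) (by simpa using hsub)
    refine ⟨fun _ => C, fun _ => hCcl, fun _ => hCirr, fun i => by
      have : i = 0 := Fin.ext (by omega)
      rw [this]; exact hCim, fun i j hij => absurd hij (by omega), fun _ => hCB⟩
  | succ n ih =>
    intro Dc hcl hirr hchain B hB hsub
    obtain ⟨Ct, hCtB, hCtcl, hCtirr, hCtim⟩ :=
      aux_step hcont hclosed hfib hB (hcl _) (hirr _) hsub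
    have hlast : Dc ((Fin.last n).castSucc) ⊆ f '' Ct := by
      rw [hCtim]
      exact (hchain _ _ (Fin.castSucc_lt_last _)).subset
    obtain ⟨E', h'cl, h'irr, h'im, h'mono, h'sub⟩ :=
      ih (fun i => Dc i.castSucc) (fun i => hcl _) (fun i => hirr _)
        (fun i j hij => hchain _ _ (by simpa using hij)) Ct hCtcl hlast
    refine ⟨Fin.lastCases Ct E', ?_, ?_, ?_, ?_, ?_⟩
    · intro i
      induction i using Fin.lastCases with
      | last => simpa using hCtcl
      | cast i => simpa using h'cl i
    · intro i
      induction i using Fin.lastCases with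
      | last => simpa using hCtirr
      | cast i => simpa using h'irr i
    · intro i
      induction i using Fin.lastCases with
      | last => simpa using hCtim
      | cast i => simpa using h'im i
    · intro i j hij
      induction j using Fin.lastCases with
      | last =>
        have hine : i ≠ Fin.last (n+1) := hij.ne
        obtain ⟨i', rfl⟩ := Fin.exists_castSucc_eq.mpr hine
        simp only [Fin.lastCases_castSucc, Fin.lastCases_last]
        refine Set.ssubset_iff_subset_ne.mpr ⟨h'sub i', fun hEq => ?_⟩
        have h2 := hchain i'.castSucc (Fin.last (n+1)) (Fin.castSucc_lt_last _)
        exact h2.ne (by rw [← h'im i', hEq, hCtim])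
      | cast j =>
        have hine : i ≠ Fin.last (n+1) := ne_of_lt (hij.trans (Fin.castSucc_lt_last _))
        obtain ⟨i', rfl⟩ := Fin.exists_castSucc_eq.mpr hine
        simp only [Fin.lastCases_castSucc]
        exact h'mono i' j (by simpa using hij)
    · intro i
      induction i using Fin.lastCases with
      | last => simpa using hCtB
      | cast i => simpa using (h'sub i).trans hCtB

/-- A strict chain of irreducible closed subsets of the ambient space bounds the dimension. -/
lemma aux_chain_le_dim (n : ℕ) (E : Fin (n+1) → Set X)
    (hcl : ∀ i, IsClosed (E i)) (hirr : ∀ i, IsIrreducible (E i))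
    (hmono : ∀ i j, i < j → E i ⊂ E j) :
    (n : WithBot ℕ∞) ≤ topologicalKrullDim X := by
  let p : LTSeries (IrreducibleCloseds X) :=
    ⟨n, fun i => ⟨E i, hirr i, hcl i⟩, fun i => by
      have := hmono i.castSucc i.succ (Fin.castSucc_lt_succ (i := i))
      exact this⟩
  exact Order.LTSeries.length_le_krullDim p

/-- Subtype version: a strict chain of irreducible closed subsets of `X` all contained
in `W` bounds the dimension of `W`. -/
lemma aux_chain_le_dim_sub {W : Set X} (n : ℕ) (E : Fin (n+1) → Set X)
    (hcl : ∀ i, IsClosed (E i)) (hirr : ∀ i, IsIrreducible (E i))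
    (hmono : ∀ i j, i < j → E i ⊂ E j) (hsub : ∀ i, E i ⊆ W) :
    (n : WithBot ℕ∞) ≤ topologicalKrullDim W := by
  refine aux_chain_le_dim n (fun i => (Subtype.val : W → X) ⁻¹' E i)
    (fun i => (hcl i).preimage continuous_subtype_val)
    (fun i => aux_irr_preimage (hsub i) (hirr i))
    (fun i j hij => ?_)
  obtain ⟨x, hxj, hxi⟩ := Set.exists_of_ssubset (hmono i j hij)
  refine ⟨Set.preimage_mono (hmono i j hij).subset, fun hcon => hxi ?_⟩
  exact hcon (show (⟨x, hsub j hxj⟩ : W) ∈ _ from hxj)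

/-- Key lemma: under the standing hypotheses, `f` cannot map a strictly smaller
irreducible closed set onto the image of a bigger one. -/
lemma aux_image_ne (hcont : Continuous f)
    (hclosed : ∀ C : Set X, IsClosed C → IsClosed (f '' C))
    (hfib : ∀ y : Y, (f ⁻¹' {y}).Finite)
    (hdimY : topologicalKrullDim Y ≠ ⊤)
    (hdim : ∀ Z : Set Y, IsClosed Z →
      topologicalKrullDim (f ⁻¹' Z) ≤ topologicalKrullDim Z)
    {C C' : Set X} (hCcl : IsClosed C) (hC'cl : IsClosed C')
    (hCirr : IsIrreducible C) (hC'irr : IsIrreducible C')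
    (hlt : C ⊂ C') (him : f '' C = f '' C') : False := by
  set D : Set Y := f '' C' with hD
  have hDcl : IsClosed D := hclosed C' hC'cl
  have hDirr : IsIrreducible D := hC'irr.image f hcont.continuousOn
  -- the dimension of D is a natural number
  haveI : Nonempty (IrreducibleCloseds D) := by
    haveI := Subtype.irreducibleSpace hDirr
    exact ⟨⟨Set.univ, IrreducibleSpace.isIrreducible_univ _, isClosed_univ⟩⟩
  have h0 : (0 : WithBot ℕ∞) ≤ topologicalKrullDim D := krullDim_nonneg
  have hDle : topologicalKrullDim D ≤ topologicalKrullDim Y :=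
    IsInducing.topologicalKrullDim_le hDcl.isClosedEmbedding_subtypeVal.isInducing
  have hDne : topologicalKrullDim D ≠ ⊤ := fun h => hdimY (top_le_iff.mp (h ▸ hDle))
  obtain ⟨k, hk⟩ : ∃ k : ℕ, topologicalKrullDim D = ((k : ℕ∞) : WithBot ℕ∞) := by
    have hDbot : topologicalKrullDim D ≠ ⊥ := fun h => by rw [h] at h0; exact absurd h0 (by simp)
    obtain ⟨e, he⟩ := WithBot.ne_bot_iff_exists.mp hDbot
    have hetop : e ≠ ⊤ := fun h => hDne (by rw [← he, h]; rfl)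
    obtain ⟨k, hk'⟩ := WithTop.ne_top_iff_exists.mp hetop
    exact ⟨k, by rw [← he, ← hk']; rfl⟩
  -- extract a chain of length exactly k
  have hiSup : (⨆ p : LTSeries (IrreducibleCloseds D), (p.length : ℕ∞)) = (k : ℕ∞) := by
    have := krullDim_eq_iSup_length (α := IrreducibleCloseds D)
    rw [show krullDim (IrreducibleCloseds D) = topologicalKrullDim D from rfl, hk] at this
    exact_mod_cast this.symm
  obtain ⟨p, hp⟩ : ∃ p : LTSeries (IrreducibleCloseds D), (p.length : ℕ∞) = (k : ℕ∞) := by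
    have hlt' : sSup (Set.range fun p : LTSeries (IrreducibleCloseds D) => (p.length : ℕ∞)) < ⊤ := by
      rw [← iSup, hiSup]; exact ENat.coe_lt_top _
    haveI : Nonempty (LTSeries (IrreducibleCloseds D)) := ⟨RelSeries.singleton _ (Classical.arbitrary _)⟩
    haveI : Nonempty (Set.range fun p : LTSeries (IrreducibleCloseds D) => (p.length : ℕ∞)) :=
      Set.range_nonempty _ |>.to_subtype
    obtain ⟨p, hp⟩ := ENat.sSup_mem_of_nonempty_of_lt_top hlt'
    refine ⟨p, ?_⟩
    have h2 : sSup (Set.range fun p : LTSeries (IrreducibleCloseds D) => (p.length : ℕ∞))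
        = (k : ℕ∞) := hiSup
    simpa using hp.trans h2
  have hplen : p.length = k := by exact_mod_cast hp
  -- transfer the chain to ambient irreducible closed subsets of Y
  set Dc : Fin (p.length + 1) → Set Y := fun i => (Subtype.val : D → Y) '' (p i : Set D) with hDc
  have hDccl : ∀ i, IsClosed (Dc i) :=
    fun i => hDcl.isClosedEmbedding_subtypeVal.isClosedMap _ (p i).isClosed'
  have hDcirr : ∀ i, IsIrreducible (Dc i) :=
    fun i => (p i).isIrreducible'.image _ continuous_subtype_val.continuousOn
  have hDcmono : ∀ i j, i < j → Dc i ⊂ Dc j := by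
    intro i j hij
    have hlt2 : p i < p j := p.strictMono hij
    have h1 : ((p i : Set D)) ⊂ ((p j : Set D)) := hlt2
    exact Subtype.val_injective.image_strictMono h1
  have hDcsub : ∀ i, Dc i ⊆ D := fun i => by rintro y ⟨a, _, rfl⟩; exact a.2
  have hDclast : Dc (Fin.last p.length) ⊆ f '' C := by rw [him]; exact hDcsub _
  -- lift the chain below C and append C'
  obtain ⟨E, hEcl, hEirr, hEim, hEmono, hEsub⟩ :=
    aux_lift hcont hclosed hfib p.length Dc hDccl hDcirr hDcmono C hCcl hDclast
  set E₂ : Fin (p.length + 2) → Set X := Fin.lastCases C' E with hE₂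
  have hkey : ((p.length + 1 : ℕ) : WithBot ℕ∞) ≤ topologicalKrullDim (f ⁻¹' D) := by
    refine aux_chain_le_dim_sub (p.length + 1) E₂ ?_ ?_ ?_ ?_
    · intro i
      induction i using Fin.lastCases with
      | last => simpa [hE₂] using hC'cl
      | cast i => simpa [hE₂] using hEcl i
    · intro i
      induction i using Fin.lastCases with
      | last => simpa [hE₂] using hC'irr
      | cast i => simpa [hE₂] using hEirr i
    · intro i j hij
      induction j using Fin.lastCases with
      | last =>
        have hine : i ≠ Fin.last (p.length+1) := hij.ne
        obtain ⟨i', rfl⟩ := Fin.exists_castSucc_eq.mpr hine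
        simp only [hE₂, Fin.lastCases_castSucc, Fin.lastCases_last]
        exact (hEsub i').trans_ssubset hlt
      | cast j =>
        have hine : i ≠ Fin.last (p.length+1) := ne_of_lt (hij.trans (Fin.castSucc_lt_last _))
        obtain ⟨i', rfl⟩ := Fin.exists_castSucc_eq.mpr hine
        simp only [hE₂, Fin.lastCases_castSucc]
        exact hEmono i' j (by simpa using hij)
    · intro i
      induction i using Fin.lastCases with
      | last =>
        simp only [hE₂, Fin.lastCases_last]
        exact fun x hx => Set.mem_image_of_mem f hx
      | cast i =>
        simp only [hE₂, Fin.lastCases_castSucc]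
        intro x hx
        have : f x ∈ Dc i := (hEim i) ▸ Set.mem_image_of_mem f hx
        exact hDcsub i this
  have hfinal := hkey.trans ((hdim D hDcl).trans hk.le)
  rw [hplen] at hfinal
  exact absurd hfinal (by exact_mod_cast Nat.not_succ_le_self k)

/-- Part 1: the preimage of an arbitrary subset has dimension at most that of the subset. -/
lemma aux_part1 (hcont : Continuous f)
    (hclosed : ∀ C : Set X, IsClosed C → IsClosed (f '' C))
    (hfib : ∀ y : Y, (f ⁻¹' {y}).Finite)
    (hdimY : topologicalKrullDim Y ≠ ⊤)
    (hdim : ∀ Z : Set Y, IsClosed Z →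
      topologicalKrullDim (f ⁻¹' Z) ≤ topologicalKrullDim Z)
    (A : Set Y) : topologicalKrullDim (f ⁻¹' A) ≤ topologicalKrullDim A := by
  -- the map on irreducible closed subsets
  have hcore : ∀ T : IrreducibleCloseds (f ⁻¹' A),
      IsIrreducible ((Subtype.val : A → Y) ⁻¹'
        closure (f '' (Subtype.val '' (T : Set (f ⁻¹' A))))) ∧
      f '' (Subtype.val '' (T : Set (f ⁻¹' A))) ⊆ A := by
    intro T
    set T' : Set X := Subtype.val '' (T : Set (f ⁻¹' A)) with hT'
    have hT'irr : IsIrreducible T' :=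
      T.isIrreducible'.image _ continuous_subtype_val.continuousOn
    have hs : IsIrreducible (f '' T') := hT'irr.image f hcont.continuousOn
    have hsubA : f '' T' ⊆ A := by
      rintro y ⟨x, ⟨a, -, rfl⟩, rfl⟩
      exact a.2
    have heq : (Subtype.val : A → Y) ⁻¹' closure (f '' T')
        = Subtype.val ⁻¹' (closure (f '' T') ∩ A) := by
      ext a
      simp [a.2]
    constructor
    · rw [heq]
      exact aux_irr_preimage Set.inter_subset_right
        (aux_irr_between hs (Set.subset_inter subset_closure hsubA) Set.inter_subset_left)
    · exact hsubA
  set φ : IrreducibleCloseds (f ⁻¹' A) → IrreducibleCloseds A := fun T =>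
    ⟨(Subtype.val : A → Y) ⁻¹' closure (f '' (Subtype.val '' (T : Set (f ⁻¹' A)))),
      (hcore T).1, isClosed_closure.preimage continuous_subtype_val⟩ with hφ
  have hstrict : StrictMono φ := by
    intro T₁ T₂ hlt12
    have hle : φ T₁ ≤ φ T₂ := by
      have h12 : (T₁ : Set (f ⁻¹' A)) ⊆ (T₂ : Set (f ⁻¹' A)) := hlt12.le
      show ((Subtype.val : A → Y) ⁻¹'
          closure (f '' (Subtype.val '' (T₁ : Set (f ⁻¹' A)))) : Set A) ⊆
        (Subtype.val : A → Y) ⁻¹' closure (f '' (Subtype.val '' (T₂ : Set (f ⁻¹' A))))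
      exact Set.preimage_mono (closure_mono (Set.image_mono (Set.image_mono h12)))
    refine lt_of_le_of_ne hle (fun hEq => ?_)
    -- notation
    set T₁' : Set X := Subtype.val '' (T₁ : Set (f ⁻¹' A)) with hT₁'
    set T₂' : Set X := Subtype.val '' (T₂ : Set (f ⁻¹' A)) with hT₂'
    set Z₁ : Set Y := closure (f '' T₁') with hZ₁
    set Z₂ : Set Y := closure (f '' T₂') with hZ₂
    have hpre : (Subtype.val : A → Y) ⁻¹' Z₁ = Subtype.val ⁻¹' Z₂ :=
      congrArg (fun (t : IrreducibleCloseds A) => (t : Set A)) hEq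
    have hinter : A ∩ Z₁ = A ∩ Z₂ := by
      rw [← Subtype.image_preimage_coe, ← Subtype.image_preimage_coe, hpre]
    -- hence Z₁ = Z₂
    have hZeq : Z₁ = Z₂ := by
      have h1 : f '' T₁' ⊆ Z₂ := by
        have := (hcore T₁).2
        intro y hy
        have hmem : y ∈ A ∩ Z₁ := ⟨(hcore T₁).2 hy, subset_closure hy⟩
        exact (hinter ▸ hmem).2
      have h2 : f '' T₂' ⊆ Z₁ := by
        intro y hy
        have hmem : y ∈ A ∩ Z₂ := ⟨(hcore T₂).2 hy, subset_closure hy⟩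
        exact (hinter.symm ▸ hmem).2
      exact le_antisymm (closure_minimal h1 isClosed_closure)
        (closure_minimal h2 isClosed_closure)
    -- the closures in X
    set K₁ : Set X := closure T₁' with hK₁
    set K₂ : Set X := closure T₂' with hK₂
    have hTKi : ∀ (T : IrreducibleCloseds (f ⁻¹' A)),
        Subtype.val '' (T : Set (f ⁻¹' A)) =
          closure (Subtype.val '' (T : Set (f ⁻¹' A))) ∩ (f ⁻¹' A) := by
      intro T
      obtain ⟨Ct, hCt, hTeq⟩ := isClosed_induced_iff.mp T.isClosed'
      refine le_antisymm (Set.subset_inter subset_closure (by rintro x ⟨a, -, rfl⟩; exact a.2)) ?_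
      have h1 : Subtype.val '' (T : Set (f ⁻¹' A)) = Ct ∩ (f ⁻¹' A) := by
        have hc : (T : Set (f ⁻¹' A)) = Subtype.val ⁻¹' Ct := hTeq.symm
        rw [hc, Subtype.image_preimage_coe]
        exact Set.inter_comm _ _
      have h2 : closure (Subtype.val '' (T : Set (f ⁻¹' A))) ⊆ Ct :=
        closure_minimal (h1.le.trans Set.inter_subset_left) hCt
      intro x hx
      rw [h1]
      exact ⟨h2 hx.1, hx.2⟩
    have hKne : K₁ ≠ K₂ := by
      intro hKeq
      have : T₁' = T₂' := by
        have e1 : T₁' = K₁ ∩ (f ⁻¹' A) := hTKi T₁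
        have e2 : T₂' = K₂ ∩ (f ⁻¹' A) := hTKi T₂
        rw [e1, e2, hKeq]
      have hTT : (T₁ : Set (f ⁻¹' A)) = (T₂ : Set (f ⁻¹' A)) :=
        Subtype.val_injective.image_injective this
      exact hlt12.ne (SetLike.coe_injective hTT)
    have hKsub : K₁ ⊂ K₂ := by
      refine Set.ssubset_iff_subset_ne.mpr ⟨closure_mono ?_, hKne⟩
      exact Set.image_mono hlt12.le
    -- images of the closures agree
    have hfK : ∀ (T' : Set X), f '' closure T' = closure (f '' T') := by
      intro T'
      refine le_antisymm ?_ ?_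
      · exact (image_closure_subset_closure_image hcont)
      · exact closure_minimal (Set.image_mono subset_closure)
          (hclosed _ isClosed_closure)
    have hfinal : f '' K₁ = f '' K₂ := by
      rw [hK₁, hK₂, hfK, hfK, ← hZ₁, ← hZ₂, hZeq]
    exact aux_image_ne hcont hclosed hfib hdimY hdim isClosed_closure isClosed_closure
      (T₁.isIrreducible'.image _ continuous_subtype_val.continuousOn).closure
      (T₂.isIrreducible'.image _ continuous_subtype_val.continuousOn).closure
      hKsub hfinal
  exact krullDim_le_of_strictMono φ hstrict


end AuxTop

/-- A finite surjective morphism (closed, surjective, finite fibres, not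
raising dimension of preimages of closed sets) does not raise the dimension of
preimages of arbitrary subsets, and preserves the total dimension. -/
theorem dim_preimage_le_of_finite_surjective {X Y : Type*} [TopologicalSpace X]
    [TopologicalSpace Y] {f : X → Y} (hcont : Continuous f)
    (hclosed : ∀ C : Set X, IsClosed C → IsClosed (f '' C))
    (hsurj : Function.Surjective f)
    (hfib : ∀ y : Y, (f ⁻¹' {y}).Finite)
    (hdimX : topologicalKrullDim X ≠ ⊤) (hdimY : topologicalKrullDim Y ≠ ⊤)
    (hdim : ∀ Z : Set Y, IsClosed Z →
      topologicalKrullDim (f ⁻¹' Z) ≤ topologicalKrullDim Z) :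
    (∀ A : Set Y, topologicalKrullDim (f ⁻¹' A) ≤ topologicalKrullDim A) ∧
      topologicalKrullDim X = topologicalKrullDim Y := by
  refine ⟨aux_part1 hcont hclosed hfib hdimY hdim, le_antisymm ?_ ?_⟩
  · -- dim X ≤ dim Y
    have h1 := hdim Set.univ isClosed_univ
    rw [Set.preimage_univ] at h1
    have hX : topologicalKrullDim (Set.univ : Set X) = topologicalKrullDim X :=
      (Homeomorph.Set.univ X).isHomeomorph.topologicalKrullDim_eq _
    have hY : topologicalKrullDim (Set.univ : Set Y) = topologicalKrullDim Y :=
      (Homeomorph.Set.univ Y).isHomeomorph.topologicalKrullDim_eq _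
    rw [hX, hY] at h1
    exact h1
  · -- dim Y ≤ dim X
    show Order.krullDim (TopologicalSpace.IrreducibleCloseds Y) ≤ topologicalKrullDim X
    refine iSup_le fun p => ?_
    set Dc : Fin (p.length + 1) → Set Y := fun i => (p i : Set Y) with hDc
    have hDccl : ∀ i, IsClosed (Dc i) := fun i => (p i).isClosed'
    have hDcirr : ∀ i, IsIrreducible (Dc i) := fun i => (p i).isIrreducible'
    have hDcmono : ∀ i j, i < j → Dc i ⊂ Dc j := fun i j hij => p.strictMono hij
    have hlast : Dc (Fin.last p.length) ⊆ f '' Set.univ := by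
      rw [Set.image_univ, hsurj.range_eq]
      exact Set.subset_univ _
    obtain ⟨E, hEcl, hEirr, hEim, hEmono, hEsub⟩ :=
      aux_lift hcont hclosed hfib p.length Dc hDccl hDcirr hDcmono Set.univ isClosed_univ hlast
    exact aux_chain_le_dim p.length E hEcl hEirr hEmono
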